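/- Let n be a positive integer, a = (a_1,...,a_n) and b = (b_1,...,b_n) be n-tuples of complex numbers with b_k ≠ 0 for all k, and p = (p_1,...,p_n) nonnegative real weights with ∑_{i=1}^n p_i = 1. Suppose there exist α ∈ ℂ with α ≠ 0 and r > 0 such that a_k / conj(b_k) ∈ D̄(α,r) for every k ∈ {1,...,n}. Then 0 ≤ (∑_{k=1}^n p_k |a_k|^2)^{1/2} (∑_{k=1}^n p_k |b_k|^2)^{1/2} - | ∑_{k=1}^n p_k a_k b_k | ≤ (∑_{k=1}^n p_k |a_k|^2)^{1/2} (∑_{k=1}^n p_k |b_k|^2)^{1/2} - Re[ (conj(α)/|α|) · ∑_{k=1}^n p_k a_k b_k ] ≤ (1/2) · (r^2/|α|) · ∑_{k=1}^n p_k |b_k|^2. -/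

import Mathlib

theorem stmt_5 (n : ℕ) (hn : 0 < n) (a b : Fin n → ℂ) (p : Fin n → ℝ)
    (hb : ∀ k, b k ≠ 0) (hp : ∀ k, 0 ≤ p k) (hp1 : ∑ i, p i = 1)
    (α : ℂ) (hα : α ≠ 0) (r : ℝ) (hr : 0 < r)
    (h : ∀ k, ‖a k / (starRingEnd ℂ) (b k) - α‖ ≤ r) :
    0 ≤ (∑ k, p k * ‖a k‖ ^ 2) ^ ((1 : ℝ) / 2)
        * (∑ k, p k * ‖b k‖ ^ 2) ^ ((1 : ℝ) / 2)
        - ‖∑ k, (p k : ℂ) * a k * b k‖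
    ∧ (∑ k, p k * ‖a k‖ ^ 2) ^ ((1 : ℝ) / 2)
        * (∑ k, p k * ‖b k‖ ^ 2) ^ ((1 : ℝ) / 2)
        - ‖∑ k, (p k : ℂ) * a k * b k‖
      ≤ (∑ k, p k * ‖a k‖ ^ 2) ^ ((1 : ℝ) / 2)
        * (∑ k, p k * ‖b k‖ ^ 2) ^ ((1 : ℝ) / 2)
        - (((starRingEnd ℂ) α / (‖α‖ : ℂ)) * ∑ k, (p k : ℂ) * a k * b k).re
    ∧ (∑ k, p k * ‖a k‖ ^ 2) ^ ((1 : ℝ) / 2)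
        * (∑ k, p k * ‖b k‖ ^ 2) ^ ((1 : ℝ) / 2)
        - (((starRingEnd ℂ) α / (‖α‖ : ℂ)) * ∑ k, (p k : ℂ) * a k * b k).re
      ≤ (1 / 2) * (r ^ 2 / ‖α‖) * ∑ k, p k * ‖b k‖ ^ 2 := by
  set A := ∑ k, p k * ‖a k‖ ^ 2 with hAdef
  set B := ∑ k, p k * ‖b k‖ ^ 2 with hBdef
  set S := ∑ k, (p k : ℂ) * a k * b k with hSdef
  have hA : 0 ≤ A := Finset.sum_nonneg fun k _ => mul_nonneg (hp k) (sq_nonneg _)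
  have hB : 0 ≤ B := Finset.sum_nonneg fun k _ => mul_nonneg (hp k) (sq_nonneg _)
  have hrwA : A ^ ((1:ℝ)/2) = Real.sqrt A := (Real.sqrt_eq_rpow A).symm
  have hrwB : B ^ ((1:ℝ)/2) = Real.sqrt B := (Real.sqrt_eq_rpow B).symm
  rw [hrwA, hrwB]
  set m := ‖α‖ with hmdef
  have hm : 0 < m := norm_pos_iff.mpr hα
  -- Cauchy-Schwarz
  have habsS : ‖S‖ ≤ Real.sqrt A * Real.sqrt B := by
    have h1 : ‖S‖ ≤ ∑ k, p k * (‖a k‖ * ‖b k‖) := by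
      refine (norm_sum_le _ _).trans_eq ?_
      refine Finset.sum_congr rfl fun k _ => ?_
      simp [norm_mul, Complex.norm_real, abs_of_nonneg (hp k), mul_assoc]
    have h2 : ∑ k, p k * (‖a k‖ * ‖b k‖)
        ≤ Real.sqrt A * Real.sqrt B := by
      have h3 := Real.sum_mul_le_sqrt_mul_sqrt Finset.univ
        (fun k => Real.sqrt (p k) * ‖a k‖)
        (fun k => Real.sqrt (p k) * ‖b k‖)
      have e1 : ∀ k : Fin n, (Real.sqrt (p k) * ‖a k‖) *
          (Real.sqrt (p k) * ‖b k‖)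
          = p k * (‖a k‖ * ‖b k‖) := by
        intro k
        rw [show (Real.sqrt (p k) * ‖a k‖) * (Real.sqrt (p k) * ‖b k‖)
          = (Real.sqrt (p k) * Real.sqrt (p k)) * (‖a k‖ * ‖b k‖) from
          by ring, Real.mul_self_sqrt (hp k)]
      have e2 : ∀ k : Fin n, (Real.sqrt (p k) * ‖a k‖) ^ 2
          = p k * ‖a k‖ ^ 2 := by
        intro k; rw [mul_pow, Real.sq_sqrt (hp k)]
      have e3 : ∀ k : Fin n, (Real.sqrt (p k) * ‖b k‖) ^ 2
          = p k * ‖b k‖ ^ 2 := by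
        intro k; rw [mul_pow, Real.sq_sqrt (hp k)]
      simp only [e1, e2, e3] at h3
      exact h3
    linarith
  -- pointwise bound
  have hpt : ∀ k : Fin n, ‖a k‖ ^ 2 + m ^ 2 * ‖b k‖ ^ 2
      - 2 * ((starRingEnd ℂ) α * (a k * b k)).re ≤ r ^ 2 * ‖b k‖ ^ 2 := by
    intro k
    have hbk : (starRingEnd ℂ) (b k) ≠ 0 := by
      simpa using hb k
    have h0 : ‖a k - α * (starRingEnd ℂ) (b k)‖ ≤ r * ‖b k‖ := by
      have e : a k - α * (starRingEnd ℂ) (b k)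
          = (a k / (starRingEnd ℂ) (b k) - α) * (starRingEnd ℂ) (b k) := by
        field_simp
      rw [e, norm_mul, Complex.norm_conj]
      exact mul_le_mul_of_nonneg_right (h k) (norm_nonneg _)
    have h0' : ‖a k - α * (starRingEnd ℂ) (b k)‖ ^ 2
        ≤ (r * ‖b k‖) ^ 2 := by
      exact pow_le_pow_left₀ (norm_nonneg _) h0 2
    rw [Complex.sq_norm, Complex.normSq_sub] at h0'
    have e2 : (a k * (starRingEnd ℂ) (α * (starRingEnd ℂ) (b k)))
        = (starRingEnd ℂ) α * (a k * b k) := by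
      rw [map_mul, Complex.conj_conj]; ring
    rw [e2] at h0'
    have e3 : Complex.normSq (a k) = ‖a k‖ ^ 2 := (Complex.sq_norm _).symm
    have e4 : Complex.normSq (α * (starRingEnd ℂ) (b k)) = m ^ 2 * ‖b k‖ ^ 2 := by
      rw [← Complex.sq_norm, norm_mul, Complex.norm_conj, mul_pow]
    rw [e3, e4] at h0'
    nlinarith [h0']
  -- summed bound
  have hReS : ((starRingEnd ℂ) α * S).re
      = ∑ k, p k * ((starRingEnd ℂ) α * (a k * b k)).re := by
    rw [hSdef, Finset.mul_sum, Complex.re_sum]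
    refine Finset.sum_congr rfl fun k _ => ?_
    rw [show (starRingEnd ℂ) α * ((p k : ℂ) * a k * b k)
      = (p k : ℂ) * ((starRingEnd ℂ) α * (a k * b k)) from by ring, Complex.re_ofReal_mul]
  have hsum : A + m ^ 2 * B - 2 * ((starRingEnd ℂ) α * S).re ≤ r ^ 2 * B := by
    have h4 : ∑ k, p k * (‖a k‖ ^ 2 + m ^ 2 * ‖b k‖ ^ 2
        - 2 * ((starRingEnd ℂ) α * (a k * b k)).re)
        ≤ ∑ k, p k * (r ^ 2 * ‖b k‖ ^ 2) :=
      Finset.sum_le_sum fun k _ => mul_le_mul_of_nonneg_left (hpt k) (hp k)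
    have e5 : ∑ k, p k * (‖a k‖ ^ 2 + m ^ 2 * ‖b k‖ ^ 2
        - 2 * ((starRingEnd ℂ) α * (a k * b k)).re)
        = A + m ^ 2 * B - 2 * ((starRingEnd ℂ) α * S).re := by
      rw [hReS, hAdef, hBdef]
      rw [Finset.mul_sum, Finset.mul_sum, ← Finset.sum_add_distrib, ← Finset.sum_sub_distrib]
      exact Finset.sum_congr rfl fun k _ => by ring
    have e6 : ∑ k, p k * (r ^ 2 * ‖b k‖ ^ 2) = r ^ 2 * B := by
      rw [hBdef, Finset.mul_sum]
      exact Finset.sum_congr rfl fun k _ => by ring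
    rw [e5, e6] at h4
    exact h4
  -- rewrite Re(u*S)
  have hu : (((starRingEnd ℂ) α / (m : ℂ)) * S).re = m⁻¹ * ((starRingEnd ℂ) α * S).re := by
    rw [show ((starRingEnd ℂ) α / (m : ℂ)) * S = ((m⁻¹ : ℝ) : ℂ) * ((starRingEnd ℂ) α * S) from
      by push_cast; field_simp, Complex.re_ofReal_mul]
  have hule : (((starRingEnd ℂ) α / (m : ℂ)) * S).re ≤ ‖S‖ := by
    refine (Complex.re_le_norm _).trans_eq ?_
    rw [norm_mul, norm_div, Complex.norm_conj, Complex.norm_real, Real.norm_eq_abs, abs_of_pos hm,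
      div_self hm.ne', one_mul]
  have hamgm : 2 * m * (Real.sqrt A * Real.sqrt B) ≤ A + m ^ 2 * B := by
    nlinarith [sq_nonneg (Real.sqrt A - m * Real.sqrt B), Real.sq_sqrt hA, Real.sq_sqrt hB,
      Real.sqrt_nonneg A, Real.sqrt_nonneg B]
  refine ⟨by linarith [habsS], by linarith [hule], ?_⟩
  rw [hu]
  have hfin : m * (Real.sqrt A * Real.sqrt B) - ((starRingEnd ℂ) α * S).re ≤ r ^ 2 * B / 2 := by
    linarith
  have e7 : Real.sqrt A * Real.sqrt B - m⁻¹ * ((starRingEnd ℂ) α * S).re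
      = (m * (Real.sqrt A * Real.sqrt B) - ((starRingEnd ℂ) α * S).re) / m := by
    field_simp
    try ring
  have e8 : (1 : ℝ) / 2 * (r ^ 2 / m) * B = (r ^ 2 * B / 2) / m := by
    field_simp
    try ring
  rw [e7, e8]
  gcongr
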